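/- Every finitely presented module over a valuation ring has projective dimension at most 1. -/

import Mathlib

universe u

/-- A principal ideal of a domain is a free module. -/
lemma free_of_isPrincipal_aux {V : Type u} [CommRing V] [IsDomain V]
    (I : Ideal V) (hI : I.IsPrincipal) : Module.Free V I := by
  obtain ⟨a, rfl⟩ := hI
  rcases eq_or_ne a 0 with rfl | ha
  · rw [Submodule.span_singleton_eq_bot.mpr rfl]
    infer_instance
  · have hli : LinearIndependent V (fun _ : Fin 1 => a) := by
      refine linearIndependent_unique_iff.mpr ?_
      simpa using ha
    have : Set.range (fun _ : Fin 1 => a) = ({a} : Set V) := by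
      simp [Set.range_const]
    have b := Module.Basis.span hli
    rw [this] at b
    exact Module.Free.of_basis b

/-- Every finitely generated submodule of `Fin n → V` over a valuation ring is free. -/
lemma free_fg_submodule_aux (V : Type u) [CommRing V] [IsDomain V] [ValuationRing V] :
    ∀ (n : ℕ) (N : Submodule V (Fin n → V)), N.FG → Module.Free V N := by
  intro n
  induction n with
  | zero =>
    intro N _
    have : Subsingleton (Fin 0 → V) := by
      constructor; intro f g; funext i; exact absurd i.2 (by omega)
    infer_instance
  | succ n IH =>
    intro N hN
    haveI : Module.Finite V N := ⟨(Submodule.fg_top N).mpr hN⟩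
    set π : (Fin (n + 1) → V) →ₗ[V] V := LinearMap.proj (Fin.last n) with hπ
    set φ : N →ₗ[V] V := π.comp N.subtype with hφ
    set I : Ideal V := LinearMap.range φ with hIdef
    haveI : Module.Finite V I := Module.Finite.range φ
    have hIfg : I.FG := (Submodule.fg_top I).mp Module.Finite.fg_top
    have hIp : I.IsPrincipal := IsBezout.isPrincipal_of_FG I hIfg
    haveI hIfree : Module.Free V I := free_of_isPrincipal_aux I hIp
    set φ' : N →ₗ[V] I := φ.rangeRestrict with hφ'
    have hsurj : Function.Surjective φ' := LinearMap.surjective_rangeRestrict φ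
    obtain ⟨s, hs⟩ := Module.projective_lifting_property φ' LinearMap.id hsurj
    -- `N ≃ₗ ker φ' × I`
    have hmem : ∀ x : N, x - s (φ' x) ∈ LinearMap.ker φ' := by
      intro x
      simp only [LinearMap.mem_ker, map_sub]
      have : φ' (s (φ' x)) = φ' x := congrArg (· (φ' x)) hs
      rw [this, sub_self]
    set toFun : N →ₗ[V] (LinearMap.ker φ' × I) :=
      LinearMap.prod ((LinearMap.id - s.comp φ').codRestrict (LinearMap.ker φ')
        (by intro x; simpa using hmem x)) φ' with htoFun
    set invFun : (LinearMap.ker φ' × I) →ₗ[V] N :=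
      (LinearMap.ker φ').subtype.comp (LinearMap.fst V _ _) +
        s.comp (LinearMap.snd V _ _) with hinvFun
    have hcomp1 : ∀ p : (LinearMap.ker φ' × I), toFun (invFun p) = p := by
      rintro ⟨⟨x, hx⟩, y⟩
      have hy : φ' (s y) = y := LinearMap.congr_fun hs y
      have hx' : φ' x = 0 := hx
      refine Prod.ext (Subtype.ext ?_) ?_ <;>
        simp [htoFun, hinvFun, map_add, hx', hy]
    have hcomp2 : ∀ x : N, invFun (toFun x) = x := by
      intro x
      simp [htoFun, hinvFun]
    set e : N ≃ₗ[V] (LinearMap.ker φ' × I) :=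
      LinearEquiv.ofLinear toFun invFun (LinearMap.ext hcomp1) (LinearMap.ext hcomp2)
      with he
    haveI : Module.Finite V (LinearMap.ker φ') := by
      refine Module.Finite.of_surjective ((LinearMap.fst V _ _).comp e.toLinearMap) ?_
      exact Prod.fst_surjective.comp e.surjective
    -- embed `ker φ'` into `Fin n → V`
    set g : (Fin (n + 1) → V) →ₗ[V] (Fin n → V) := LinearMap.funLeft V V Fin.castSucc with hg
    set j : (LinearMap.ker φ') →ₗ[V] (Fin n → V) :=
      (g.comp N.subtype).comp (LinearMap.ker φ').subtype with hj
    have hjinj : Function.Injective j := by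
      rw [injective_iff_map_eq_zero]
      rintro ⟨⟨x, hxN⟩, hxker⟩ hx0
      have hlast : x (Fin.last n) = 0 := by
        have : φ' ⟨x, hxN⟩ = 0 := hxker
        have := congrArg (Subtype.val) this
        simpa [hφ', hφ, hπ] using this
      have hcast : ∀ k : Fin n, x (Fin.castSucc k) = 0 := by
        intro k
        have h2 := congrFun hx0 k
        simpa [hj, hg, LinearMap.funLeft] using h2
      have hx : x = 0 := by
        funext i
        refine Fin.lastCases ?_ ?_ i
        · exact hlast
        · exact hcast
      ext
      simp [hx]
    haveI : Module.Finite V (LinearMap.range j) := Module.Finite.range j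
    have hrfg : (LinearMap.range j).FG := (Submodule.fg_top _).mp Module.Finite.fg_top
    haveI : Module.Free V (LinearMap.range j) := IH _ hrfg
    haveI : Module.Free V (LinearMap.ker φ') :=
      Module.Free.of_equiv (LinearEquiv.ofInjective j hjinj).symm
    exact Module.Free.of_equiv e.symm

/-- Every finitely presented module over a valuation ring has projective dimension
at most 1: it admits a projective resolution `0 → P₁ → P₀ → M → 0`, where we can take
`P₀` to be finite free and `P₁` the (projective) kernel of the augmentation. -/
theorem projDim_le_one_of_valuationRing
    (V : Type u) [CommRing V] [IsDomain V] [ValuationRing V]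
    (M : Type u) [AddCommGroup M] [Module V M] [Module.FinitePresentation V M] :
    ∃ (n : ℕ) (f : (Fin n → V) →ₗ[V] M),
      Function.Surjective f ∧ Module.Projective V (LinearMap.ker f) := by
  obtain ⟨n, f, hf⟩ := Module.Finite.exists_fin' V M
  refine ⟨n, f, hf, ?_⟩
  have hker : (LinearMap.ker f).FG := Module.FinitePresentation.fg_ker f hf
  haveI : Module.Free V (LinearMap.ker f) := free_fg_submodule_aux V n _ hker
  infer_instance
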